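/- In the exterior algebra Λ(Q^n) with generators θ_1,...,θ_n, let F_r = Σ_{A ⊆ [n], |A| = r} θ_A, where θ_A is the ordered product of θ_a for a ∈ A in increasing order. Then for all r, s ≥ 0, F_r · F_s = a_{r,s} · F_{r+s}, where a_{r,s} = 0 if r and s are both odd, and a_{r,s} = C(⌊(r+s)/2⌋, ⌊r/2⌋) otherwise. -/

import Mathlib

open ExteriorAlgebra

/-- The generator `θ_i` of the exterior algebra `Λ(ℚ^n)`. -/
noncomputable def theta (n : ℕ) (i : Fin n) : ExteriorAlgebra ℚ (Fin n → ℚ) :=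
  ExteriorAlgebra.ι ℚ (Pi.single i (1 : ℚ))

/-- For `A = {a_1 < a_2 < ⋯ < a_k} ⊆ [n]`, the monomial `θ_A = θ_{a_1} θ_{a_2} ⋯ θ_{a_k}`. -/
noncomputable def thetaA (n : ℕ) (A : Finset (Fin n)) : ExteriorAlgebra ℚ (Fin n → ℚ) :=
  ((A.sort (· ≤ ·)).map (theta n)).prod

/-- The fundamental quasisymmetric invariant `F_{1^r} = Σ_{A ⊆ [n], |A| = r} θ_A`. -/
noncomputable def Fq (n r : ℕ) : ExteriorAlgebra ℚ (Fin n → ℚ) :=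
  ∑ A ∈ Finset.powersetCard r (Finset.univ : Finset (Fin n)), thetaA n A

/- ### Auxiliary material -/

lemma theta_sq (n : ℕ) (i : Fin n) : theta n i * theta n i = 0 := ι_sq_zero _

lemma theta_anticomm (n : ℕ) (i j : Fin n) :
    theta n i * theta n j = -(theta n j * theta n i) := by
  unfold theta
  exact eq_neg_of_add_eq_zero_left (ι_add_mul_swap _ _)

lemma thetaA_empty (n : ℕ) : thetaA n ∅ = 1 := by
  simp [thetaA]

lemma thetaA_insert_min {n : ℕ} {a : Fin n} {B : Finset (Fin n)}
    (h₁ : ∀ x ∈ B, a < x) (h₂ : a ∉ B) :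
    thetaA n (insert a B) = theta n a * thetaA n B := by
  rw [thetaA, Finset.sort_insert (· ≤ ·) (fun b hb => (h₁ b hb).le) h₂]
  simp [thetaA]

/-- Multiplying a single generator into a monomial. -/
lemma theta_mul_thetaA {n : ℕ} (a : Fin n) (B : Finset (Fin n)) :
    theta n a * thetaA n B =
      if a ∈ B then 0
      else ((-1 : ℚ) ^ ((B.filter (· < a)).card)) • thetaA n (insert a B) := by
  classical
  induction B using Finset.induction_on_min with
  | empty =>
      simp [thetaA_empty, thetaA, Finset.sort_singleton]
  | insert b B hmin hIH =>
      have hbB : b ∉ B := fun hb => lt_irrefl b (hmin b hb)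
      rw [thetaA_insert_min hmin hbB]
      rcases lt_trichotomy a b with hab | rfl | hba
      · -- a < b : a is the new minimum
        have haB : a ∉ insert b B := by
          simp only [Finset.mem_insert]
          rintro (h | h)
          · exact ne_of_lt hab h
          · exact absurd (hmin a h) (asymm hab)
        have hfilter : (insert b B).filter (· < a) = ∅ := by
          apply Finset.filter_eq_empty_iff.2
          intro x hx
          rcases Finset.mem_insert.1 hx with rfl | hx
          · exact not_lt.2 hab.le
          · exact not_lt.2 (hab.trans (hmin x hx)).le
        have hmin' : ∀ x ∈ insert b B, a < x := by
          intro x hx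
          rcases Finset.mem_insert.1 hx with rfl | hx
          · exact hab
          · exact hab.trans (hmin x hx)
        rw [if_neg haB, hfilter, thetaA_insert_min hmin' haB,
          thetaA_insert_min hmin hbB]
        simp
      · -- a = b
        rw [← mul_assoc, theta_sq, zero_mul, if_pos (Finset.mem_insert_self a B)]
      · -- b < a
        rw [← mul_assoc, theta_anticomm, neg_mul, mul_assoc, hIH]
        by_cases haB : a ∈ B
        · rw [if_pos haB, if_pos (Finset.mem_insert_of_mem haB)]
          simp
        · have haB' : a ∉ insert b B := by
            simp only [Finset.mem_insert]
            rintro (h | h)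
            · exact ne_of_gt hba h
            · exact haB h
          rw [if_neg haB, if_neg haB']
          have hbIns : b ∉ insert a B := by
            simp only [Finset.mem_insert]
            rintro (h | h)
            · exact ne_of_lt hba h
            · exact hbB h
          have hminIns : ∀ x ∈ insert a B, b < x := by
            intro x hx
            rcases Finset.mem_insert.1 hx with rfl | hx
            · exact hba
            · exact hmin x hx
          have hcomm : insert b (insert a B) = insert a (insert b B) :=
            Finset.insert_comm b a B
          have hfb : (insert b B).filter (· < a) = insert b (B.filter (· < a)) := by
            rw [Finset.filter_insert, if_pos hba]
          have hcard : ((insert b B).filter (· < a)).card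
              = (B.filter (· < a)).card + 1 := by
            rw [hfb, Finset.card_insert_of_notMem (fun h => hbB (Finset.mem_filter.1 h).1)]
          have hins : thetaA n (insert b (insert a B)) = theta n b * thetaA n (insert a B) :=
            thetaA_insert_min hminIns hbIns
          rw [hcard, mul_smul_comm, ← hins, hcomm, pow_succ]
          rw [mul_comm ((-1 : ℚ) ^ (B.filter (· < a)).card) (-1), ← smul_smul]
          simp

/-- Number of "inversions" between two finsets. -/
def inv2 {n : ℕ} (A B : Finset (Fin n)) : ℕ :=
  ∑ x ∈ A, (B.filter (· < x)).card

/-- Product of two monomials. -/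
lemma thetaA_mul {n : ℕ} (A B : Finset (Fin n)) :
    thetaA n A * thetaA n B =
      if Disjoint A B then ((-1 : ℚ) ^ (inv2 A B)) • thetaA n (A ∪ B) else 0 := by
  classical
  induction A using Finset.induction_on_min with
  | empty => simp [thetaA_empty, inv2]
  | insert a A₀ hmin hIH =>
      have haA₀ : a ∉ A₀ := fun h => lt_irrefl a (hmin a h)
      rw [thetaA_insert_min hmin haA₀, mul_assoc, hIH]
      by_cases hdisj : Disjoint A₀ B
      · rw [if_pos hdisj, mul_smul_comm, theta_mul_thetaA]
        by_cases haB : a ∈ B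
        · rw [if_pos (Finset.mem_union_right _ haB), if_neg
            (fun h => (Finset.disjoint_insert_left.1 h).1 haB)]
          simp
        · have haU : a ∉ A₀ ∪ B := by
            simp only [Finset.mem_union]
            rintro (h | h)
            · exact haA₀ h
            · exact haB h
          rw [if_neg haU, if_pos (Finset.disjoint_insert_left.2 ⟨haB, hdisj⟩)]
          have hfA₀ : A₀.filter (· < a) = ∅ := by
            apply Finset.filter_eq_empty_iff.2
            intro x hx
            exact not_lt.2 (hmin x hx).le
          have hfU : ((A₀ ∪ B).filter (· < a)).card = (B.filter (· < a)).card := by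
            rw [Finset.filter_union, hfA₀, Finset.empty_union]
          have hinv : inv2 (insert a A₀) B = (B.filter (· < a)).card + inv2 A₀ B := by
            rw [inv2, Finset.sum_insert haA₀]; rfl
          rw [hfU, hinv, Finset.insert_union, smul_smul, ← pow_add]
          ring_nf
      · rw [if_neg hdisj, if_neg
          (fun h => hdisj (Finset.disjoint_insert_left.1 h).2)]
        simp

/-- Signed sum over `r`-subsets. -/
def Ssum {n : ℕ} (C : Finset (Fin n)) (r : ℕ) : ℤ :=
  ∑ A ∈ C.powersetCard r, (-1) ^ (inv2 A (C \ A))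

lemma Ssum_zero {n : ℕ} (C : Finset (Fin n)) : Ssum C 0 = 1 := by
  simp [Ssum, inv2]

lemma Ssum_of_gt {n : ℕ} {C : Finset (Fin n)} {r : ℕ} (h : C.card < r) :
    Ssum C r = 0 := by
  rw [Ssum, Finset.powersetCard_eq_empty.2 h, Finset.sum_empty]

/-- The claimed coefficient, as an integer. -/
def aInt (r s : ℕ) : ℤ :=
  if Odd r ∧ Odd s then 0 else (((r + s) / 2).choose (r / 2) : ℤ)

lemma aInt_zero_right (r : ℕ) : aInt r 0 = 1 := by
  have h : ¬ (Odd r ∧ Odd 0) := by simp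
  rw [aInt, if_neg h]
  have : (r + 0) / 2 = r / 2 := by omega
  rw [this, Nat.choose_self]
  norm_num

lemma aInt_zero_left (s : ℕ) : aInt 0 s = 1 := by
  have h : ¬ (Odd 0 ∧ Odd s) := by simp
  rw [aInt, if_neg h]
  simp

lemma aInt_rec (r s : ℕ) :
    aInt (r + 1) (s + 1) = aInt r (s + 1) + (-1) ^ (r + 1) * aInt (r + 1) s := by
  have neg_even : ∀ k : ℕ, ((-1 : ℤ)) ^ (2 * k) = 1 := fun k => by
    rw [pow_mul]; norm_num
  rcases Nat.even_or_odd r with ⟨i, hi⟩ | ⟨i, hi⟩ <;>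
    rcases Nat.even_or_odd s with ⟨j, hj⟩ | ⟨j, hj⟩ <;> subst hi <;> subst hj
  · -- r = i+i, s = j+j
    rw [aInt, if_pos ⟨⟨i, by ring⟩, ⟨j, by ring⟩⟩,
      aInt, if_neg (by rintro ⟨⟨k, hk⟩, -⟩; omega),
      aInt, if_neg (by rintro ⟨-, ⟨k, hk⟩⟩; omega)]
    have h1 : (i + i + (j + j + 1)) / 2 = i + j := by omega
    have h2 : (i + i) / 2 = i := by omega
    have h3 : (i + i + 1 + (j + j)) / 2 = i + j := by omega
    have h4 : (i + i + 1) / 2 = i := by omega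
    have hp : ((-1 : ℤ)) ^ (i + i + 1) = -1 := by
      have : i + i + 1 = 2 * i + 1 := by ring
      rw [this, pow_succ, neg_even]; norm_num
    rw [h1, h2, h3, h4, hp]
    ring
  · -- r = i+i, s = 2j+1
    rw [aInt, if_neg (by rintro ⟨-, ⟨k, hk⟩⟩; omega),
      aInt, if_neg (by rintro ⟨⟨k, hk⟩, -⟩; omega),
      aInt, if_pos ⟨⟨i, by ring⟩, ⟨j, by ring⟩⟩]
    have h1 : (i + i + 1 + (2 * j + 1 + 1)) / 2 = i + j + 1 := by omega
    have h2 : (i + i + 1) / 2 = i := by omega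
    have h3 : (i + i + (2 * j + 1 + 1)) / 2 = i + j + 1 := by omega
    have h4 : (i + i) / 2 = i := by omega
    rw [h1, h2, h3, h4]
    ring
  · -- r = 2i+1, s = j+j
    rw [aInt, if_neg (by rintro ⟨⟨k, hk⟩, -⟩; omega),
      aInt, if_pos ⟨⟨i, by ring⟩, ⟨j, by ring⟩⟩,
      aInt, if_neg (by rintro ⟨-, ⟨k, hk⟩⟩; omega)]
    have h1 : (2 * i + 1 + 1 + (j + j + 1)) / 2 = i + j + 1 := by omega
    have h2 : (2 * i + 1 + 1) / 2 = i + 1 := by omega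
    have h3 : (2 * i + 1 + 1 + (j + j)) / 2 = i + j + 1 := by omega
    have hp : ((-1 : ℤ)) ^ (2 * i + 1 + 1) = 1 := by
      have : 2 * i + 1 + 1 = 2 * (i + 1) := by ring
      rw [this, neg_even]
    rw [h1, h2, h3, hp]
    ring
  · -- r = 2i+1, s = 2j+1
    rw [aInt, if_neg (by rintro ⟨⟨k, hk⟩, -⟩; omega),
      aInt, if_neg (by rintro ⟨-, ⟨k, hk⟩⟩; omega),
      aInt, if_neg (by rintro ⟨⟨k, hk⟩, -⟩; omega)]
    have h1 : (2 * i + 1 + 1 + (2 * j + 1 + 1)) / 2 = i + j + 1 + 1 := by omega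
    have h2 : (2 * i + 1 + 1) / 2 = i + 1 := by omega
    have h3 : (2 * i + 1 + (2 * j + 1 + 1)) / 2 = i + j + 1 := by omega
    have h4 : (2 * i + 1) / 2 = i := by omega
    have h5 : (2 * i + 1 + 1 + (2 * j + 1)) / 2 = i + j + 1 := by omega
    have hp : ((-1 : ℤ)) ^ (2 * i + 1 + 1) = 1 := by
      have : 2 * i + 1 + 1 = 2 * (i + 1) := by ring
      rw [this, neg_even]
    rw [h1, h2, h3, h4, h5, hp]
    have pascal := Nat.choose_succ_succ (i + j + 1) i
    push_cast [pascal]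
    ring

lemma Ssum_eq {n : ℕ} (C : Finset (Fin n)) :
    ∀ r s : ℕ, C.card = r + s → Ssum C r = aInt r s := by
  classical
  induction C using Finset.induction_on_min with
  | empty =>
      intro r s h
      simp only [Finset.card_empty] at h
      obtain ⟨rfl, rfl⟩ : r = 0 ∧ s = 0 := by omega
      rw [Ssum_zero, aInt_zero_left]
  | insert a C₀ hmin hIH =>
      intro r s hcard
      have haC₀ : a ∉ C₀ := fun h => lt_irrefl a (hmin a h)
      rw [Finset.card_insert_of_notMem haC₀] at hcard
      match r with
      | 0 => rw [Ssum_zero, aInt_zero_left]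
      | r + 1 =>
        have hdisjPC : Disjoint (Finset.powersetCard (r + 1) C₀)
            ((Finset.powersetCard r C₀).image (insert a)) := by
          rw [Finset.disjoint_left]
          intro A hA hA'
          obtain ⟨hsub, -⟩ := Finset.mem_powersetCard.1 hA
          obtain ⟨A₀, hA₀, rfl⟩ := Finset.mem_image.1 hA'
          exact haC₀ (hsub (Finset.mem_insert_self a A₀))
        have hinj : ∀ x ∈ Finset.powersetCard r C₀, ∀ y ∈ Finset.powersetCard r C₀,
            insert a x = insert a y → x = y := by
          intro x hx y hy hxy
          have hax : a ∉ x := fun h => haC₀ ((Finset.mem_powersetCard.1 hx).1 h)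
          have hay : a ∉ y := fun h => haC₀ ((Finset.mem_powersetCard.1 hy).1 h)
          rw [← Finset.erase_insert hax, hxy, Finset.erase_insert hay]
        have key : Ssum (insert a C₀) (r + 1)
            = (-1) ^ (r + 1) * Ssum C₀ (r + 1) + Ssum C₀ r := by
          rw [Ssum, Finset.powersetCard_succ_insert haC₀,
            Finset.sum_union hdisjPC, Finset.sum_image hinj]
          congr 1
          · -- subsets not containing a
            rw [Ssum, Finset.mul_sum]
            apply Finset.sum_congr rfl
            intro A hA
            obtain ⟨hsub, hAcard⟩ := Finset.mem_powersetCard.1 hA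
            have haA : a ∉ A := fun h => haC₀ (hsub h)
            have hsd : insert a C₀ \ A = insert a (C₀ \ A) :=
              Finset.insert_sdiff_of_notMem _ haA
            have hinv : inv2 A (insert a (C₀ \ A)) = inv2 A (C₀ \ A) + (r + 1) := by
              rw [inv2, inv2, ← hAcard, Finset.card_eq_sum_ones, ← Finset.sum_add_distrib]
              apply Finset.sum_congr rfl
              intro x hx
              have hax : a < x := hmin x (hsub hx)
              have haCA : a ∉ C₀ \ A := fun h => haC₀ (Finset.mem_sdiff.1 h).1
              rw [Finset.filter_insert, if_pos hax,
                Finset.card_insert_of_notMem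
                  (fun h => haCA (Finset.mem_filter.1 h).1)]
            rw [hsd, hinv, pow_add]
            ring
          · -- subsets containing a
            rw [Ssum]
            apply Finset.sum_congr rfl
            intro A₀ hA₀
            obtain ⟨hsub, hA₀card⟩ := Finset.mem_powersetCard.1 hA₀
            have haA₀ : a ∉ A₀ := fun h => haC₀ (hsub h)
            have hsd : insert a C₀ \ insert a A₀ = C₀ \ A₀ := by
              ext x
              simp only [Finset.mem_sdiff, Finset.mem_insert, not_or]
              constructor
              · rintro ⟨h1 | h1, h2, h3⟩
                · exact absurd h1 h2
                · exact ⟨h1, h3⟩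
              · rintro ⟨h1, h2⟩
                exact ⟨Or.inr h1, fun h => haC₀ (h ▸ h1), h2⟩
            have hfilter : ((C₀ \ A₀).filter (· < a)) = ∅ := by
              apply Finset.filter_eq_empty_iff.2
              intro x hx
              exact not_lt.2 (hmin x (Finset.mem_sdiff.1 hx).1).le
            have hinv : inv2 (insert a A₀) (C₀ \ A₀) = inv2 A₀ (C₀ \ A₀) := by
              rw [inv2, Finset.sum_insert haA₀, hfilter]
              simp [inv2]
            rw [hsd, hinv]
        match s with
        | 0 =>
          have hC₀ : C₀.card = r := by omega
          rw [key, Ssum_of_gt (by omega), hIH r 0 (by omega), aInt_zero_right,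
            aInt_zero_right]
          ring
        | s + 1 =>
          rw [key, hIH r (s + 1) (by omega), hIH (r + 1) s (by omega), aInt_rec]
          ring

theorem stmt3 (n r s : ℕ) :
    Fq n r * Fq n s
    = (if Odd r ∧ Odd s then 0 else (((r + s) / 2).choose (r / 2) : ℚ)) • Fq n (r + s) := by
  classical
  have step1 : Fq n r * Fq n s
      = ∑ p ∈ ((Finset.powersetCard r (Finset.univ : Finset (Fin n))) ×ˢ
          (Finset.powersetCard s (Finset.univ : Finset (Fin n)))).filter
            (fun p => Disjoint p.1 p.2),
          ((-1 : ℚ) ^ (inv2 p.1 p.2)) • thetaA n (p.1 ∪ p.2) := by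
    rw [Fq, Fq, Finset.sum_mul_sum, Finset.sum_filter, ← Finset.sum_product']
    apply Finset.sum_congr rfl
    intro p _
    exact thetaA_mul p.1 p.2
  have step2 : (∑ p ∈ ((Finset.powersetCard r (Finset.univ : Finset (Fin n))) ×ˢ
          (Finset.powersetCard s (Finset.univ : Finset (Fin n)))).filter
            (fun p => Disjoint p.1 p.2),
          ((-1 : ℚ) ^ (inv2 p.1 p.2)) • thetaA n (p.1 ∪ p.2))
      = ∑ q ∈ (Finset.powersetCard (r + s) (Finset.univ : Finset (Fin n))).sigma
          (fun C => C.powersetCard r),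
          ((-1 : ℚ) ^ (inv2 q.2 (q.1 \ q.2))) • thetaA n q.1 := by
    apply Finset.sum_nbij' (i := fun p => (⟨p.1 ∪ p.2, p.1⟩ : (_ : Finset (Fin n)) × Finset (Fin n)))
      (j := fun q => (q.2, q.1 \ q.2))
    · -- hi
      intro p hp
      simp only [Finset.mem_filter, Finset.mem_product, Finset.mem_powersetCard_univ] at hp
      obtain ⟨⟨hr, hs⟩, hd⟩ := hp
      rw [Finset.mem_sigma, Finset.mem_powersetCard_univ, Finset.mem_powersetCard]
      exact ⟨by rw [Finset.card_union_of_disjoint hd, hr, hs],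
        Finset.subset_union_left, hr⟩
    · -- hj
      intro q hq
      rw [Finset.mem_sigma, Finset.mem_powersetCard_univ, Finset.mem_powersetCard] at hq
      obtain ⟨hC, hsub, hA⟩ := hq
      simp only [Finset.mem_filter, Finset.mem_product, Finset.mem_powersetCard_univ]
      refine ⟨⟨hA, ?_⟩, Finset.disjoint_sdiff⟩
      rw [Finset.card_sdiff_of_subset hsub, hC, hA]
      omega
    · -- left_inv
      intro p hp
      simp only [Finset.mem_filter] at hp
      rw [Finset.union_sdiff_cancel_left hp.2]
    · -- right_inv
      intro q hq
      obtain ⟨h1, h2⟩ := Finset.mem_sigma.1 hq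
      rw [Finset.union_sdiff_of_subset (Finset.mem_powersetCard.1 h2).1]
    · -- values
      intro p hp
      simp only [Finset.mem_filter] at hp
      rw [Finset.union_sdiff_cancel_left hp.2]
  have step3 : (∑ q ∈ (Finset.powersetCard (r + s) (Finset.univ : Finset (Fin n))).sigma
          (fun C => C.powersetCard r),
          ((-1 : ℚ) ^ (inv2 q.2 (q.1 \ q.2))) • thetaA n q.1)
      = ∑ C ∈ Finset.powersetCard (r + s) (Finset.univ : Finset (Fin n)),
          ((aInt r s : ℤ) : ℚ) • thetaA n C := by
    rw [Finset.sum_sigma]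
    apply Finset.sum_congr rfl
    intro C hC
    have hCcard : C.card = r + s := Finset.mem_powersetCard_univ.1 hC
    dsimp only
    rw [← Finset.sum_smul]
    congr 1
    have : (∑ A ∈ C.powersetCard r, ((-1 : ℚ) ^ (inv2 A (C \ A))))
        = ((Ssum C r : ℤ) : ℚ) := by
      rw [Ssum]
      push_cast
      rfl
    rw [this, Ssum_eq C r s hCcard]
  rw [step1, step2, step3, ← Finset.smul_sum, ← Fq]
  congr 1
  rw [aInt]
  split_ifs <;> push_cast <;> ring
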